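/- Let X be a topological space, let Φ : X → ℝ be a function with Φ⁻¹(0) ≠ ∅, and let J : X → ℝ be a function such that for every real λ > 0 the function x ↦ λΦ(x) − J(x) is lower semicontinuous, inf-compact, and admits a unique global minimum on X. Assume moreover that J has no global maximum on X. Let I ⊆ (0, +∞) be an open interval and let Ψ : I → ℝ be an increasing function with Ψ(I) = (0, +∞). Then there exists a unique point x̃ ∈ X such that Φ(x̃) ∈ I and Ψ(Φ(x̃))·Φ(x̃) − J(x̃) = inf_{x ∈ X} ( Ψ(Φ(x̃))·Φ(x) − J(x) ). -/

import Mathlib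

set_option maxHeartbeats 1000000
open Filter Topology Set

private lemma lsc_cluster_le {X : Type*} [TopologicalSpace X] {f : X → ℝ}
    (hf : LowerSemicontinuous f) {u : ℕ → X} {x : X}
    (hx : ClusterPt x (Filter.map u Filter.atTop)) {y : ℝ}
    (hy : ∀ᶠ n in Filter.atTop, f (u n) ≤ y) : f x ≤ y := by
  by_contra hlt
  push_neg at hlt
  have h1 : {z | y < f z} ∈ 𝓝 x := hf x y hlt
  have h2 : {z | f z ≤ y} ∈ Filter.map u Filter.atTop := hy
  obtain ⟨z, hz⟩ := hx.neBot.nonempty_of_mem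
    (Filter.inter_mem (Filter.mem_inf_of_left h1) (Filter.mem_inf_of_right h2))
  exact absurd (Set.mem_setOf_eq ▸ hz.2) (not_le.2 hz.1)

private lemma real_le_of_forall_pos {a b : ℝ} (H : ∀ ε : ℝ, 0 < ε → a ≤ b + ε) : a ≤ b := by
  by_contra h
  push_neg at h
  have := H ((a - b)/2) (by linarith)
  linarith

/-- **Theorem 2.1 (Ricceri).** Let `X` be a topological space, `Φ : X → ℝ` with
`Φ⁻¹(0) ≠ ∅`, and `J : X → ℝ` such that for every `λ > 0` the function
`x ↦ λ·Φ(x) − J(x)` is lower semicontinuous, inf-compact and admits a unique global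
minimum.  Assume `J` has no global maximum.  Let `I ⊆ (0,∞)` be an open interval and
`Ψ : I → ℝ` increasing with `Ψ(I) = (0,∞)`.  Then there is a unique `x̃` with
`Φ(x̃) ∈ I` minimizing `x ↦ Ψ(Φ(x̃))·Φ(x) − J(x)` over `X`. -/
theorem stmt0 {X : Type*} [TopologicalSpace X] (Φ J : X → ℝ)
    (hΦ0 : ∃ x, Φ x = 0)
    (hlsc : ∀ lam : ℝ, 0 < lam → LowerSemicontinuous (fun x => lam * Φ x - J x))
    (hinfcpt : ∀ lam : ℝ, 0 < lam → ∀ r : ℝ, IsCompact {x | lam * Φ x - J x ≤ r})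
    (hmin : ∀ lam : ℝ, 0 < lam →
      ∃! x₀ : X, ∀ x, lam * Φ x₀ - J x₀ ≤ lam * Φ x - J x)
    (hJ : ¬ ∃ x₀ : X, ∀ x, J x ≤ J x₀)
    (I : Set ℝ) (hIsub : I ⊆ Set.Ioi 0) (hIopen : IsOpen I) (hIconn : I.OrdConnected)
    (Ψ : ℝ → ℝ) (hΨmono : StrictMonoOn Ψ I) (hΨsurj : Ψ '' I = Set.Ioi 0) :
    ∃! xt : X, Φ xt ∈ I ∧
      ∀ x, Ψ (Φ xt) * Φ xt - J xt ≤ Ψ (Φ xt) * Φ x - J x := by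
  classical
  obtain ⟨x0, hx0⟩ := hΦ0
  have hex : ∀ lam : ℝ, ∃ z : X, 0 < lam → ∀ x, lam * Φ z - J z ≤ lam * Φ x - J x := by
    intro lam
    by_cases h : 0 < lam
    · obtain ⟨z, hz, -⟩ := hmin lam h
      exact ⟨z, fun _ => hz⟩
    · exact ⟨x0, fun h' => absurd h' h⟩
  choose xl hxl using hex
  have uniq : ∀ {lam : ℝ}, 0 < lam → ∀ {y : X},
      (∀ x, lam * Φ y - J y ≤ lam * Φ x - J x) → y = xl lam := by
    intro lam h y hy
    obtain ⟨z, hz, hu⟩ := hmin lam h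
    exact (hu y hy).trans (hu (xl lam) (hxl lam h)).symm
  set φf : ℝ → ℝ := fun lam => Φ (xl lam) with hφf
  set mf : ℝ → ℝ := fun lam => lam * φf lam - J (xl lam) with hmf
  have hmono : ∀ {a b : ℝ}, 0 < a → a ≤ b → φf b ≤ φf a := by
    intro a b ha hab
    rcases eq_or_lt_of_le hab with rfl | h
    · exact le_refl _
    · have h1 := hxl a ha (xl b)
      have h2 := hxl b (ha.trans h) (xl a)
      have hba : 0 < b - a := sub_pos.2 h
      simp only [hφf]
      nlinarith [h1, h2]
  have hmle : ∀ {a b : ℝ}, 0 < a → 0 < b → mf b ≤ mf a + (b - a) * φf a := by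
    intro a b ha hb
    have h1 := hxl b hb (xl a)
    simp only [hmf, hφf]
    nlinarith [h1]
  -- main convergence lemma
  have hconv : ∀ (t : ℕ → ℝ) (lam c : ℝ), 0 < lam → (∀ n, 0 < t n) →
      Tendsto t atTop (𝓝 lam) → Tendsto (fun n => φf (t n)) atTop (𝓝 c) →
      c = φf lam := by
    intro t lam c hlam htpos ht hφt
    have herr : Tendsto (fun n => (t n - lam) * (φf lam - φf (t n))) atTop (𝓝 0) := by
      have h1 : Tendsto (fun n => t n - lam) atTop (𝓝 0) := by
        simpa using ht.sub (tendsto_const_nhds (x := lam))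
      have h2 : Tendsto (fun n => φf lam - φf (t n)) atTop (𝓝 (φf lam - c)) :=
        tendsto_const_nhds.sub hφt
      simpa using h1.mul h2
    have hA : ∀ n, lam * Φ (xl (t n)) - J (xl (t n)) ≤
        mf lam + (t n - lam) * (φf lam - φf (t n)) := by
      intro n
      have h1 := hxl (t n) (htpos n) (xl lam)
      simp only [hmf, hφf]
      nlinarith [h1]
    have hev : ∀ᶠ n in atTop, xl (t n) ∈ {x | lam * Φ x - J x ≤ mf lam + 1} := by
      have h1 : ∀ᶠ n in atTop, (t n - lam) * (φf lam - φf (t n)) ≤ 1 :=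
        herr.eventually_le_const one_pos
      filter_upwards [h1] with n hn
      have := hA n
      show lam * Φ (xl (t n)) - J (xl (t n)) ≤ mf lam + 1
      linarith
    obtain ⟨N, hN⟩ := eventually_atTop.1 hev
    set v : ℕ → X := fun n => xl (t (n + N)) with hv
    have hvK : ∀ n, v n ∈ {x | lam * Φ x - J x ≤ mf lam + 1} := fun n => hN (n + N) le_add_self
    obtain ⟨xs, hxsK, hcl⟩ := (hinfcpt lam hlam (mf lam + 1)).exists_clusterPt
      (f := Filter.map v atTop) (le_principal_iff.2 (mem_map.2 (Eventually.of_forall hvK)))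
    have hst : Tendsto (fun n => t (n + N)) atTop (𝓝 lam) := ht.comp (tendsto_add_atTop_nat N)
    have hsφ : Tendsto (fun n => φf (t (n + N))) atTop (𝓝 c) := hφt.comp (tendsto_add_atTop_nat N)
    have herr' : Tendsto (fun n => (t (n + N) - lam) * (φf lam - φf (t (n + N)))) atTop (𝓝 0) :=
      herr.comp (tendsto_add_atTop_nat N)
    have hkey : ∀ μ : ℝ, 0 < μ → μ * Φ xs - J xs ≤ mf lam + (μ - lam) * c := by
      intro μ hμ
      refine real_le_of_forall_pos ?_
      intro ε hε
      refine lsc_cluster_le (hlsc μ hμ) hcl ?_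
      have hlim : Tendsto (fun n => mf lam + (t (n + N) - lam) * (φf lam - φf (t (n + N)))
          + (μ - lam) * φf (t (n + N))) atTop (𝓝 (mf lam + 0 + (μ - lam) * c)) :=
        (tendsto_const_nhds.add herr').add (tendsto_const_nhds.mul hsφ)
      have h2 : ∀ᶠ n in atTop, mf lam + (t (n + N) - lam) * (φf lam - φf (t (n + N)))
          + (μ - lam) * φf (t (n + N)) ≤ mf lam + (μ - lam) * c + ε :=
        hlim.eventually_le_const (by linarith)
      filter_upwards [h2] with n hn
      have h1 := hA (n + N)
      have h3 : φf (t (n + N)) = Φ (xl (t (n + N))) := rfl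
      simp only [hv]
      nlinarith [h1, hn]
    have hxs_min : ∀ x, lam * Φ xs - J xs ≤ lam * Φ x - J x := by
      intro x
      have h0 := hkey lam hlam
      have h1 := hxl lam hlam x
      have h2 : mf lam = lam * Φ (xl lam) - J (xl lam) := rfl
      nlinarith [h0, h1]
    have hxs : xs = xl lam := uniq hlam hxs_min
    have hup := hkey (lam + 1) (by linarith)
    have hdn := hkey (lam / 2) (by linarith)
    rw [hxs] at hup hdn
    have h2 : mf lam = lam * Φ (xl lam) - J (xl lam) := rfl
    have h3 : φf lam = Φ (xl lam) := rfl
    have hle1 : φf lam ≤ c := by rw [h3]; nlinarith [hup]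
    have hle2 : c ≤ φf lam := by rw [h3]; nlinarith [hdn, hlam]
    exact le_antisymm hle2 hle1
  -- continuity of φf on (0, ∞)
  have hcont : ∀ lam : ℝ, 0 < lam → ContinuousAt φf lam := by
    intro lam hlam
    -- right limit
    have htr : Tendsto (fun n : ℕ => lam + 1/(n+1)) atTop (𝓝 lam) := by
      have : Tendsto (fun n : ℕ => 1 / ((n : ℝ) + 1)) atTop (𝓝 0) := tendsto_one_div_add_atTop_nhds_zero_nat
      have h2 := tendsto_const_nhds (x := lam) (f := atTop (α := ℕ)) |>.add this
      simpa using h2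
    have hrpos : ∀ n : ℕ, 0 < lam + 1/((n : ℝ)+1) := by
      intro n
      have : (0:ℝ) < 1/((n:ℝ)+1) := by positivity
      linarith
    have hmonoR : Monotone (fun n : ℕ => φf (lam + 1/((n : ℝ)+1))) := by
      intro a b hab
      refine hmono (hrpos b) ?_
      have hab' : (a:ℝ) ≤ b := Nat.cast_le.2 hab
      have h1 : 1/((b:ℝ)+1) ≤ 1/((a:ℝ)+1) := by
        apply one_div_le_one_div_of_le <;> [positivity; linarith]
      linarith
    have hbddR : BddAbove (Set.range fun n : ℕ => φf (lam + 1/((n:ℝ)+1))) := by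
      refine ⟨φf lam, ?_⟩
      rintro _ ⟨n, rfl⟩
      refine hmono hlam ?_
      have : (0:ℝ) < 1/((n:ℝ)+1) := by positivity
      linarith
    have htcR : Tendsto (fun n : ℕ => φf (lam + 1/((n:ℝ)+1))) atTop
        (𝓝 (⨆ n : ℕ, φf (lam + 1/((n:ℝ)+1)))) := tendsto_atTop_ciSup hmonoR hbddR
    have hR := hconv _ lam _ hlam hrpos htr htcR
    rw [hR] at htcR
    -- left limit
    have hdiv : Tendsto (fun n : ℕ => lam/((n:ℝ)+2)) atTop (𝓝 0) := by
      refine Filter.Tendsto.div_atTop tendsto_const_nhds ?_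
      exact tendsto_atTop_add_const_right atTop 2 tendsto_natCast_atTop_atTop
    have htl : Tendsto (fun n : ℕ => lam - lam/((n:ℝ)+2)) atTop (𝓝 lam) := by
      have h2 := tendsto_const_nhds (x := lam) (f := atTop (α := ℕ)) |>.sub hdiv
      simpa using h2
    have hlpos : ∀ n : ℕ, 0 < lam - lam/((n:ℝ)+2) := by
      intro n
      have h1 : lam/((n:ℝ)+2) < lam := by
        refine div_lt_self hlam ?_
        have : (0:ℝ) ≤ (n:ℝ) := Nat.cast_nonneg n
        linarith
      linarith
    have hlle : ∀ n : ℕ, lam - lam/((n:ℝ)+2) ≤ lam := by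
      intro n
      have : 0 < lam/((n:ℝ)+2) := by positivity
      linarith
    have hantiL : Antitone (fun n : ℕ => φf (lam - lam/((n:ℝ)+2))) := by
      intro a b hab
      refine hmono (hlpos a) ?_
      have hab' : (a:ℝ) ≤ b := Nat.cast_le.2 hab
      have h1 : lam/((b:ℝ)+2) ≤ lam/((a:ℝ)+2) := by
        apply div_le_div_of_nonneg_left hlam.le <;> [positivity; linarith]
      linarith
    have hbddL : BddBelow (Set.range fun n : ℕ => φf (lam - lam/((n:ℝ)+2))) := by
      refine ⟨φf lam, ?_⟩
      rintro _ ⟨n, rfl⟩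
      exact hmono (hlpos n) (hlle n)
    have htcL : Tendsto (fun n : ℕ => φf (lam - lam/((n:ℝ)+2))) atTop
        (𝓝 (⨅ n : ℕ, φf (lam - lam/((n:ℝ)+2)))) := tendsto_atTop_ciInf hantiL hbddL
    have hL := hconv _ lam _ hlam hlpos htl htcL
    rw [hL] at htcL
    -- epsilon-delta
    rw [Metric.continuousAt_iff]
    intro ε hε
    obtain ⟨n1, hn1⟩ := (htcR.eventually_const_lt (show φf lam - ε < φf lam by linarith)).exists
    obtain ⟨n2, hn2⟩ := (htcL.eventually_le_const (show φf lam < φf lam + ε/2 by linarith)).exists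
    refine ⟨min (1/((n1:ℝ)+1)) (lam/((n2:ℝ)+2)), by positivity, ?_⟩
    intro y hy
    rw [Real.dist_eq] at hy ⊢
    have hy' := abs_lt.1 hy
    have hmin1 : min (1/((n1:ℝ)+1)) (lam/((n2:ℝ)+2)) ≤ 1/((n1:ℝ)+1) := min_le_left _ _
    have hmin2 : min (1/((n1:ℝ)+1)) (lam/((n2:ℝ)+2)) ≤ lam/((n2:ℝ)+2) := min_le_right _ _
    have hylt : y < lam + 1/((n1:ℝ)+1) := by linarith [hy'.2]
    have hygt : lam - lam/((n2:ℝ)+2) < y := by linarith [hy'.1]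
    have hypos : 0 < y := lt_trans (hlpos n2) hygt
    have hu := hmono (hlpos n2) hygt.le
    have hl := hmono hypos hylt.le
    rw [abs_lt]
    constructor <;> [linarith [hu, hn2]; linarith [hl, hn1]]
  -- Claim A : φf is unbounded near 0
  have hA0 : ∀ M : ℝ, ∃ a : ℝ, 0 < a ∧ a ≤ 1 ∧ M < φf a := by
    intro M
    by_contra hcon
    push_neg at hcon
    set B : ℝ := max (|M|) (|φf 1|) with hB
    have hBnn : 0 ≤ B := le_trans (abs_nonneg M) (le_max_left _ _)
    have htp : ∀ n : ℕ, (0:ℝ) < 1/((n:ℝ)+1) := fun n => by positivity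
    have htle1 : ∀ n : ℕ, 1/((n:ℝ)+1) ≤ 1 := by
      intro n
      rw [div_le_one (by positivity)]
      linarith [Nat.cast_nonneg (α := ℝ) n]
    have hub : ∀ n : ℕ, φf (1/((n:ℝ)+1)) ≤ M := fun n => hcon _ (htp n) (htle1 n)
    have hlb : ∀ n : ℕ, φf 1 ≤ φf (1/((n:ℝ)+1)) := fun n => hmono (htp n) (htle1 n)
    have hBb : ∀ n : ℕ, |φf (1/((n:ℝ)+1))| ≤ B := by
      intro n
      rw [abs_le]
      constructor
      · have h1 : -|φf 1| ≤ φf 1 := neg_abs_le _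
        have h2 : |φf 1| ≤ B := le_max_right _ _
        linarith [hlb n]
      · have h1 : M ≤ |M| := le_abs_self M
        have h2 : |M| ≤ B := le_max_left _ _
        linarith [hub n]
    set R : ℝ := 2*B - J x0 with hRdef
    have humem : ∀ n : ℕ, xl (1/((n:ℝ)+1)) ∈ {x | 1 * Φ x - J x ≤ R} := by
      intro n
      have h1 := hxl (1/((n:ℝ)+1)) (htp n) x0
      rw [hx0] at h1
      have h3 : φf (1/((n:ℝ)+1)) = Φ (xl (1/((n:ℝ)+1))) := rfl
      have h4 := hBb n
      rw [h3, abs_le] at h4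
      show 1 * Φ (xl (1/((n:ℝ)+1))) - J (xl (1/((n:ℝ)+1))) ≤ R
      have hkey : (0:ℝ) ≤ (1 - 1/((n:ℝ)+1)) * (B - Φ (xl (1/((n:ℝ)+1)))) :=
        mul_nonneg (by linarith [htle1 n]) (by linarith [h4.2])
      nlinarith [h1, htp n, h4.1, h4.2]
    obtain ⟨xs, -, hcl⟩ := (hinfcpt 1 one_pos R).exists_clusterPt
      (f := Filter.map (fun n : ℕ => xl (1/((n:ℝ)+1))) atTop)
      (le_principal_iff.2 (mem_map.2 (Eventually.of_forall humem)))
    have hkey : ∀ x : X, ∀ μ : ℝ, 0 < μ → μ * Φ xs - J xs ≤ μ * M - J x := by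
      intro x μ hμ
      refine real_le_of_forall_pos ?_
      intro ε hε
      refine lsc_cluster_le (hlsc μ hμ) hcl ?_
      have h4 : Tendsto (fun n : ℕ => (1/((n:ℝ)+1)) * (|Φ x| + B)) atTop (𝓝 0) := by
        have := tendsto_one_div_add_atTop_nhds_zero_nat.mul
          (tendsto_const_nhds (x := |Φ x| + B) (f := atTop (α := ℕ)))
        simpa using this
      filter_upwards [h4.eventually_le_const hε] with n hn
      have h1 := hxl (1/((n:ℝ)+1)) (htp n) x
      have h2 := hub n
      have h3 := hBb n
      have h5 : φf (1/((n:ℝ)+1)) = Φ (xl (1/((n:ℝ)+1))) := rfl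
      rw [h5] at h2
      rw [h5, abs_le] at h3
      have h6 : μ * (M - Φ (xl (1/((n:ℝ)+1)))) ≥ 0 := mul_nonneg hμ.le (by linarith)
      have h7 : (1/((n:ℝ)+1)) * Φ x ≤ (1/((n:ℝ)+1)) * |Φ x| :=
        mul_le_mul_of_nonneg_left (le_abs_self _) (htp n).le
      have h8 : (0:ℝ) ≤ (1/((n:ℝ)+1)) * (B + Φ (xl (1/((n:ℝ)+1)))) :=
        mul_nonneg (htp n).le (by linarith [h3.1])
      show μ * Φ (xl (1/((n:ℝ)+1))) - J (xl (1/((n:ℝ)+1))) ≤ μ * M - J x + ε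
      nlinarith [h1, hn, h6, h7, h8]
    refine hJ ⟨xs, fun x => ?_⟩
    have hall : ∀ μ : ℝ, 0 < μ → J x - J xs ≤ μ * (M - Φ xs) := by
      intro μ hμ
      have := hkey x μ hμ
      nlinarith [this]
    by_contra hd
    push_neg at hd
    have hdpos : 0 < J x - J xs := by linarith
    have hμpos : 0 < (J x - J xs) / (|M - Φ xs| + 1) := by positivity
    have h5 := hall _ hμpos
    have h6 : (J x - J xs) / (|M - Φ xs| + 1) * (M - Φ xs) < J x - J xs := by
      rw [div_mul_eq_mul_div, div_lt_iff₀ (by positivity)]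
      have h7 : M - Φ xs ≤ |M - Φ xs| := le_abs_self _
      nlinarith [abs_nonneg (M - Φ xs)]
    linarith
  -- Claim B : φf decays at infinity
  have hB0 : ∀ b : ℝ, 1 < b → φf b ≤ (-(J x0) - mf 1) / (b - 1) := by
    intro b hb
    have h1 := hmle (a := b) (b := 1) (by linarith) one_pos
    have h2 := hxl b (by linarith) x0
    rw [hx0] at h2
    rw [le_div_iff₀ (by linarith : (0:ℝ) < b - 1)]
    have h3 : mf b = b * Φ (xl b) - J (xl b) := rfl
    have h4 : φf b = Φ (xl b) := rfl
    nlinarith [h1, h2]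
  -- the inverse function σ of Ψ
  have hσex : ∀ t : ℝ, ∃ s : ℝ, 0 < t → s ∈ I ∧ Ψ s = t := by
    have h1 : (1:ℝ) ∈ Ψ '' I := by rw [hΨsurj]; norm_num
    obtain ⟨s0, hs0, -⟩ := h1
    intro t
    by_cases h : 0 < t
    · have ht : t ∈ Ψ '' I := by rw [hΨsurj]; exact h
      obtain ⟨s, hs, hst⟩ := ht
      exact ⟨s, fun _ => ⟨hs, hst⟩⟩
    · exact ⟨s0, fun h' => absurd h' h⟩
  choose σ hσ using hσex
  have hσI : ∀ {t : ℝ}, 0 < t → σ t ∈ I := fun ht => (hσ _ ht).1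
  have hσΨ : ∀ {t : ℝ}, 0 < t → Ψ (σ t) = t := fun ht => (hσ _ ht).2
  have hinj : Set.InjOn Ψ I := hΨmono.injOn
  have hσmono : StrictMonoOn σ (Set.Ioi 0) := by
    intro p hp q hq hpq
    rw [Set.mem_Ioi] at hp hq
    by_contra h
    push_neg at h
    rcases eq_or_lt_of_le h with he | hlt
    · have h1 : Ψ (σ p) = Ψ (σ q) := by rw [he]
      rw [hσΨ hp, hσΨ hq] at h1
      exact absurd h1 (ne_of_lt hpq)
    · have h2 := hΨmono (hσI hq) (hσI hp) hlt
      rw [hσΨ hp, hσΨ hq] at h2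
      linarith
  have himg : σ '' (Set.Ioi 0) = I := by
    apply Set.Subset.antisymm
    · rintro _ ⟨t, ht, rfl⟩
      exact hσI (Set.mem_Ioi.1 ht)
    · intro s hs
      have hΨs : (0:ℝ) < Ψ s := by
        have : Ψ s ∈ Ψ '' I := Set.mem_image_of_mem Ψ hs
        rw [hΨsurj] at this
        exact this
      exact ⟨Ψ s, Set.mem_Ioi.2 hΨs, hinj (hσI hΨs) hs (hσΨ hΨs)⟩
  have hσcont : ∀ t : ℝ, 0 < t → ContinuousAt σ t := by
    intro t ht
    refine hσmono.continuousAt_of_image_mem_nhds (Ioi_mem_nhds ht) ?_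
    rw [himg]
    exact hIopen.mem_nhds (hσI ht)
  -- pick endpoints for the IVT
  obtain ⟨a, hapos, hale, haφ⟩ := hA0 (σ 1)
  have hσa_le : σ a ≤ σ 1 :=
    hσmono.monotoneOn (Set.mem_Ioi.2 hapos) (Set.mem_Ioi.2 one_pos) hale
  have ha_gt : σ a < φf a := lt_of_le_of_lt hσa_le haφ
  set C : ℝ := -(J x0) - mf 1 with hCdef
  have h2pos : (0:ℝ) < 2 := by norm_num
  have hs2pos : 0 < σ 2 := hIsub (hσI h2pos)
  set b : ℝ := max 2 (1 + (|C| + 1)/(σ 2)) with hbdef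
  have hb2 : 2 ≤ b := le_max_left _ _
  have hb1 : (1:ℝ) < b := by linarith
  have hbm1 : (0:ℝ) < b - 1 := by linarith
  have hφb : φf b ≤ |C| / (b - 1) := by
    refine le_trans (hB0 b hb1) ?_
    gcongr
    exact le_abs_self C
  have hblt : |C|/(b-1) < σ 2 := by
    have h1 : (|C|+1)/(σ 2) ≤ b - 1 := by
      have := le_max_right 2 (1 + (|C|+1)/(σ 2))
      linarith
    rw [div_lt_iff₀ hbm1]
    have h2 : σ 2 * ((|C|+1)/(σ 2)) = |C|+1 := by field_simp
    nlinarith [mul_le_mul_of_nonneg_left h1 hs2pos.le]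
  have hσb : σ 2 ≤ σ b :=
    hσmono.monotoneOn (Set.mem_Ioi.2 h2pos) (Set.mem_Ioi.2 (by linarith : (0:ℝ) < b)) hb2
  have hb_lt : φf b < σ b := by linarith
  have habl : a ≤ b := by linarith
  have hcontOn : ContinuousOn (fun t => φf t - σ t) (Set.Icc a b) := by
    intro z hz
    have hzpos : 0 < z := lt_of_lt_of_le hapos hz.1
    exact ((hcont z hzpos).sub (hσcont z hzpos)).continuousWithinAt
  have h0mem : (0:ℝ) ∈ Set.Icc (φf b - σ b) (φf a - σ a) := ⟨by linarith, by linarith⟩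
  obtain ⟨lam, hlamIcc, hlam0⟩ := intermediate_value_Icc' habl hcontOn h0mem
  have hlampos : 0 < lam := lt_of_lt_of_le hapos hlamIcc.1
  have hfix : φf lam = σ lam := by
    have h1 : φf lam - σ lam = 0 := hlam0
    linarith
  have hlamI : φf lam ∈ I := hfix ▸ hσI hlampos
  have hΨφ : Ψ (φf lam) = lam := by rw [hfix]; exact hσΨ hlampos
  refine ⟨xl lam, ⟨hlamI, ?_⟩, ?_⟩
  · intro x
    have h1 : Ψ (Φ (xl lam)) = lam := hΨφ
    rw [h1]
    exact hxl lam hlampos x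
  · rintro y ⟨hyI, hymin⟩
    have hνpos : 0 < Ψ (Φ y) := by
      have h1 : Ψ (Φ y) ∈ Ψ '' I := Set.mem_image_of_mem Ψ hyI
      rw [hΨsurj] at h1
      exact h1
    have hy_eq : y = xl (Ψ (Φ y)) := uniq hνpos hymin
    have hφν : φf (Ψ (Φ y)) = Φ y := by rw [hφf]; exact congrArg Φ hy_eq.symm
    have hσν : σ (Ψ (Φ y)) = Φ y := hinj (hσI hνpos) hyI (hσΨ hνpos)
    have hνlam : Ψ (Φ y) = lam := by
      rcases lt_trichotomy (Ψ (Φ y)) lam with h | h | h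
      · have h1 : φf lam ≤ φf (Ψ (Φ y)) := hmono hνpos h.le
        have h2 : σ (Ψ (Φ y)) < σ lam :=
          hσmono (Set.mem_Ioi.2 hνpos) (Set.mem_Ioi.2 hlampos) h
        rw [hσν] at h2
        rw [hφν] at h1
        rw [hfix] at h1
        linarith
      · exact h
      · have h1 : φf (Ψ (Φ y)) ≤ φf lam := hmono hlampos h.le
        have h2 : σ lam < σ (Ψ (Φ y)) :=
          hσmono (Set.mem_Ioi.2 hlampos) (Set.mem_Ioi.2 hνpos) h
        rw [hσν] at h2
        rw [hφν] at h1
        rw [hfix] at h1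
        linarith
    rw [hy_eq, hνlam]
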